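/- For all r, s ≥ 0, if D₁ ∈ 𝒟'_r(A) and D₂ ∈ 𝒟'_s(A), then D₁∘D₂ ∈ 𝒟_{r+s}(A). -/

import Mathlib

/-- `𝒟_n(A)`: the k-submodule of `End_k(A)` spanned by
`{l_a ∘ φ ∘ l_b : a b : A, φ ∈ 𝒟'_n(A)}`, where
`𝒟'_n(A) = {φ : l_t ∘ φ - φ ∘ l_t ∈ 𝒟_{n-1}(A) for all t}` and `𝒟_{-1}(A) = 0`. -/
noncomputable def Dnc (k : Type*) (A : Type*) [CommRing k] [Ring A] [Algebra k A] :
    ℕ → Submodule k (Module.End k A)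
  | 0 => Submodule.span k {ψ | ∃ (a b : A) (φ : Module.End k A),
      (∀ t : A, LinearMap.mulLeft k t * φ - φ * LinearMap.mulLeft k t = 0) ∧
      ψ = LinearMap.mulLeft k a * φ * LinearMap.mulLeft k b}
  | (n + 1) => Submodule.span k {ψ | ∃ (a b : A) (φ : Module.End k A),
      (∀ t : A, LinearMap.mulLeft k t * φ - φ * LinearMap.mulLeft k t ∈ Dnc k A n) ∧
      ψ = LinearMap.mulLeft k a * φ * LinearMap.mulLeft k b}

/-- `𝒟'_n(A) = {φ ∈ End_k(A) : l_t ∘ φ - φ ∘ l_t ∈ 𝒟_{n-1}(A) for all t ∈ A}`,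
with `𝒟_{-1}(A) = 0`. -/
noncomputable def Dnc' (k : Type*) (A : Type*) [CommRing k] [Ring A] [Algebra k A] :
    ℕ → Set (Module.End k A)
  | 0 => {φ | ∀ t : A, LinearMap.mulLeft k t * φ - φ * LinearMap.mulLeft k t = 0}
  | (n + 1) => {φ | ∀ t : A, LinearMap.mulLeft k t * φ - φ * LinearMap.mulLeft k t ∈ Dnc k A n}

section Aux

variable (k A : Type*) [CommRing k] [Ring A] [Algebra k A]

local notation "L" => LinearMap.mulLeft k

lemma Dnc_span (n : ℕ) : Dnc k A n = Submodule.span k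
    {ψ | ∃ (a b : A) (φ : Module.End k A), φ ∈ Dnc' k A n ∧
      ψ = L a * φ * L b} := by
  cases n <;> rfl

lemma Lmul (a b : A) : L (a * b) = L a * L b := by
  ext x; simp [mul_assoc]

variable {k A}

lemma mem_Dnc_of_mem_Dnc' {n : ℕ} {φ : Module.End k A} (h : φ ∈ Dnc' k A n) :
    φ ∈ Dnc k A n := by
  rw [Dnc_span]
  refine Submodule.subset_span ⟨1, 1, φ, h, ?_⟩
  ext x; simp

lemma Dnc_mul_L {n : ℕ} (a : A) {x : Module.End k A} (hx : x ∈ Dnc k A n) :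
    L a * x ∈ Dnc k A n := by
  rw [Dnc_span] at hx ⊢
  induction hx using Submodule.span_induction with
  | mem ψ hψ =>
    obtain ⟨c, b, φ, hφ, rfl⟩ := hψ
    refine Submodule.subset_span ⟨a * c, b, φ, hφ, ?_⟩
    rw [Lmul]; noncomm_ring
  | zero => rw [mul_zero]; exact Submodule.zero_mem _
  | add x y _ _ hx hy => rw [mul_add]; exact add_mem hx hy
  | smul c x _ hx => rw [mul_smul_comm]; exact Submodule.smul_mem _ _ hx

lemma Dnc_L_mul {n : ℕ} (b : A) {x : Module.End k A} (hx : x ∈ Dnc k A n) :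
    x * L b ∈ Dnc k A n := by
  rw [Dnc_span] at hx ⊢
  induction hx using Submodule.span_induction with
  | mem ψ hψ =>
    obtain ⟨a, c, φ, hφ, rfl⟩ := hψ
    refine Submodule.subset_span ⟨a, c * b, φ, hφ, ?_⟩
    rw [Lmul]; noncomm_ring
  | zero => rw [zero_mul]; exact Submodule.zero_mem _
  | add x y _ _ hx hy => rw [add_mul]; exact add_mem hx hy
  | smul c x _ hx => rw [smul_mul_assoc]; exact Submodule.smul_mem _ _ hx

lemma Dnc_mono : ∀ n : ℕ, Dnc' k A n ⊆ Dnc' k A (n + 1) ∧ Dnc k A n ≤ Dnc k A (n + 1) := by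
  intro n
  induction n with
  | zero =>
    have h1 : Dnc' k A 0 ⊆ Dnc' k A 1 := by
      intro φ hφ
      intro t
      rw [hφ t]
      exact Submodule.zero_mem _
    refine ⟨h1, ?_⟩
    rw [Dnc_span k A 0, Dnc_span k A 1]
    apply Submodule.span_mono
    rintro ψ ⟨a, b, φ, hφ, rfl⟩
    exact ⟨a, b, φ, h1 hφ, rfl⟩
  | succ m ih =>
    have h1 : Dnc' k A (m + 1) ⊆ Dnc' k A (m + 2) := by
      intro φ hφ t
      exact ih.2 (hφ t)
    refine ⟨h1, ?_⟩
    rw [Dnc_span k A (m + 1), Dnc_span k A (m + 2)]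
    apply Submodule.span_mono
    rintro ψ ⟨a, b, φ, hφ, rfl⟩
    exact ⟨a, b, φ, h1 hφ, rfl⟩

lemma Dnc_le {m n : ℕ} (h : m ≤ n) : Dnc k A m ≤ Dnc k A n := by
  induction h with
  | refl => exact le_rfl
  | step _ ih => exact ih.trans (Dnc_mono _).2

lemma key : ∀ n : ℕ,
    (∀ r s : ℕ, r + s = n → ∀ φ ∈ Dnc' k A r, ∀ ψ ∈ Dnc' k A s, φ * ψ ∈ Dnc' k A n) ∧
    (∀ r s : ℕ, r + s = n → ∀ x ∈ Dnc k A r, ∀ y ∈ Dnc k A s, x * y ∈ Dnc k A n) := by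
  intro n
  induction n using Nat.strong_induction_on with
  | _ n IH =>
  have comm_id : ∀ (t : A) (φ ψ : Module.End k A),
      L t * (φ * ψ) - (φ * ψ) * L t
        = (L t * φ - φ * L t) * ψ + φ * (L t * ψ - ψ * L t) := by
    intro t φ ψ; simp only [mul_sub, sub_mul, mul_assoc]; abel
  have hP : ∀ r s : ℕ, r + s = n → ∀ φ ∈ Dnc' k A r, ∀ ψ ∈ Dnc' k A s,
      φ * ψ ∈ Dnc' k A n := by
    intro r s hrs φ hφ ψ hψ
    cases n with
    | zero =>
      obtain ⟨rfl, rfl⟩ : r = 0 ∧ s = 0 := by omega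
      intro t
      rw [comm_id, hφ t, hψ t]
      simp
    | succ m =>
      intro t
      show L t * (φ * ψ) - (φ * ψ) * L t ∈ Dnc k A m
      rw [comm_id]
      apply add_mem
      · match r, hφ with
        | 0, hφ => rw [hφ t, zero_mul]; exact Submodule.zero_mem _
        | r' + 1, hφ =>
          exact Dnc_le (by omega)
            ((IH (r' + s) (by omega)).2 r' s rfl _ (hφ t) _ (mem_Dnc_of_mem_Dnc' hψ))
      · match s, hψ with
        | 0, hψ => rw [hψ t, mul_zero]; exact Submodule.zero_mem _
        | s' + 1, hψ =>
          exact Dnc_le (by omega)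
            ((IH (r + s') (by omega)).2 r s' rfl _ (mem_Dnc_of_mem_Dnc' hφ) _ (hψ t))
  refine ⟨hP, ?_⟩
  intro r s hrs x hx y hy
  have hle : Dnc k A r * Dnc k A s ≤ Dnc k A n := by
    rw [Dnc_span k A r, Dnc_span k A s, Submodule.span_mul_span, Submodule.span_le]
    rintro z hz
    rw [Set.mem_mul] at hz
    obtain ⟨x, hx, y, hy, rfl⟩ := hz
    obtain ⟨a, b, φ, hφ, rfl⟩ := hx
    obtain ⟨c, d, ψ, hψ, rfl⟩ := hy
    have hrw : (L a * φ * L b) * (L c * ψ * L d)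
        = L a * ((φ * L (b * c)) * ψ) * L d := by
      rw [Lmul]; noncomm_ring
    rw [SetLike.mem_coe, hrw]
    apply Dnc_L_mul
    apply Dnc_mul_L
    have heq : (φ * L (b * c)) * ψ
        = L (b * c) * (φ * ψ) - (L (b * c) * φ - φ * L (b * c)) * ψ := by
      simp only [mul_sub, sub_mul, mul_assoc]; abel
    rw [heq]
    apply sub_mem
    · exact Dnc_mul_L _ (mem_Dnc_of_mem_Dnc' (hP r s hrs φ hφ ψ hψ))
    · match r, hφ, hrs with
      | 0, hφ, hrs => rw [hφ (b * c), zero_mul]; exact Submodule.zero_mem _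
      | r' + 1, hφ, hrs =>
        exact Dnc_le (by omega)
          ((IH (r' + s) (by omega)).2 r' s rfl _ (hφ (b * c)) _ (mem_Dnc_of_mem_Dnc' hψ))
  exact hle (Submodule.mul_mem_mul hx hy)

end Aux

/-- If `D₁ ∈ 𝒟'_r(A)` and `D₂ ∈ 𝒟'_s(A)` then `D₁ ∘ D₂ ∈ 𝒟_{r+s}(A)`. -/
theorem Dnc'_comp_Dnc' (k : Type*) (A : Type*) [CommRing k] [Ring A] [Algebra k A]
    (r s : ℕ) (D₁ D₂ : Module.End k A) (h₁ : D₁ ∈ Dnc' k A r) (h₂ : D₂ ∈ Dnc' k A s) :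
    D₁ * D₂ ∈ Dnc k A (r + s) := by
  exact mem_Dnc_of_mem_Dnc' ((key (r + s)).1 r s rfl D₁ h₁ D₂ h₂)
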